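/- Let n ≥ 1, N ≥ 1, ω ∈ ℂ with ω^N = 1, τ : ℂ → ℂ with τ^N(ν) = ν for all ν, and g^{(j)}(ν) = ω^j for j = 0,…,N−1. Let r : ℂ×ℂ → M_{n²}(ℂ) and let k : ℂ → GL_n(ℂ) satisfy the N-unitarity relation k^{(N)}(ν) = f(ν)·1_n for some scalar function f with f(ν) ≠ 0 for all ν, and the symmetry relation r_{ab}(λ,ν) = ω·k_a(λ)k_b(ν)·r_{ab}(τ(λ),τ(ν))·k_b(ν)^{−1}k_a(λ)^{−1} for all λ,ν. Then k satisfies the N-reflection equation for r with this τ and these g^{(j)}. -/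
import Mathlib


open Matrix Kronecker

noncomputable section

/-- `x_a = x ⊗ 1`, acting on `ℂ^n ⊗ ℂ^n`. -/
def legA (n : ℕ) (x : Matrix (Fin n) (Fin n) ℂ) :
    Matrix (Fin n × Fin n) (Fin n × Fin n) ℂ :=
  x ⊗ₖ (1 : Matrix (Fin n) (Fin n) ℂ)

/-- `x_b = 1 ⊗ x`, acting on `ℂ^n ⊗ ℂ^n`. -/
def legB (n : ℕ) (x : Matrix (Fin n) (Fin n) ℂ) :
    Matrix (Fin n × Fin n) (Fin n × Fin n) ℂ :=
  (1 : Matrix (Fin n) (Fin n) ℂ) ⊗ₖ x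

/-- `k⁽ʲ⁾(ν) = k⁽ʲ⁻¹⁾(ν) · k(τʲ⁻¹(ν))`, with `k⁽⁰⁾ = 1`. -/
def kiter {n : ℕ} (k : ℂ → Matrix (Fin n) (Fin n) ℂ) (τ : ℂ → ℂ) :
    ℕ → ℂ → Matrix (Fin n) (Fin n) ℂ
  | 0, _ => 1
  | j + 1, ν => kiter k τ j ν * k (τ^[j] ν)

/-- The classical `N`-reflection equation for `r`, `τ`, `g` and `k`. -/
def NRefl (n N : ℕ) (r : ℂ → ℂ → Matrix (Fin n × Fin n) (Fin n × Fin n) ℂ)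
    (τ : ℂ → ℂ) (g : ℕ → ℂ → ℂ) (k : ℂ → Matrix (Fin n) (Fin n) ℂ) : Prop :=
  ∀ lam ν : ℂ,
    (∑ j ∈ Finset.range N,
        g j ν • (legB n (kiter k τ j ν) * r lam (τ^[j] ν) * (legB n (kiter k τ j ν))⁻¹))
        * legA n (k lam)
      = legA n (k lam) *
        ∑ j ∈ Finset.range N,
          g j ν • (legB n (kiter k τ j ν) * r (τ lam) (τ^[j] ν) * (legB n (kiter k τ j ν))⁻¹)

lemma legA_mul (n : ℕ) (x y : Matrix (Fin n) (Fin n) ℂ) :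
    legA n (x * y) = legA n x * legA n y := by
  simp [legA, ← Matrix.mul_kronecker_mul]

lemma legB_mul (n : ℕ) (x y : Matrix (Fin n) (Fin n) ℂ) :
    legB n (x * y) = legB n x * legB n y := by
  simp [legB, ← Matrix.mul_kronecker_mul]

lemma legA_inv (n : ℕ) (x : Matrix (Fin n) (Fin n) ℂ) :
    (legA n x)⁻¹ = legA n x⁻¹ := by
  simp [legA, Matrix.inv_kronecker]

lemma legB_inv (n : ℕ) (x : Matrix (Fin n) (Fin n) ℂ) :
    (legB n x)⁻¹ = legB n x⁻¹ := by
  simp [legB, Matrix.inv_kronecker]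

lemma legB_legA (n : ℕ) (x y : Matrix (Fin n) (Fin n) ℂ) :
    legB n y * legA n x = legA n x * legB n y := by
  rw [legA, legB, ← Matrix.mul_kronecker_mul, ← Matrix.mul_kronecker_mul]
  simp

lemma legB_legA' (n : ℕ) (x y : Matrix (Fin n) (Fin n) ℂ)
    (M : Matrix (Fin n × Fin n) (Fin n × Fin n) ℂ) :
    legB n y * (legA n x * M) = legA n x * (legB n y * M) := by
  rw [← mul_assoc, legB_legA, mul_assoc]

/-- A `k` satisfying the `N`-unitarity relation `k⁽ᴺ⁾(ν) = f(ν)·1` and the symmetry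
relation `r(λ,ν) = ω k_a(λ) k_b(ν) r(τ(λ),τ(ν)) k_b(ν)⁻¹ k_a(λ)⁻¹` (with `ωᴺ = 1` and
`τᴺ = id`) satisfies the `N`-reflection equation with `g⁽ʲ⁾(ν) = ωʲ`. -/
theorem stmt4 (n N : ℕ) (hn : 1 ≤ n) (hN : 1 ≤ N) (ω : ℂ) (hω : ω ^ N = 1)
    (τ : ℂ → ℂ) (hτ : ∀ ν : ℂ, τ^[N] ν = ν)
    (r : ℂ → ℂ → Matrix (Fin n × Fin n) (Fin n × Fin n) ℂ)
    (k : ℂ → Matrix (Fin n) (Fin n) ℂ) (hk : ∀ ν : ℂ, IsUnit (k ν))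
    (f : ℂ → ℂ) (hf : ∀ ν : ℂ, f ν ≠ 0)
    (hunit : ∀ ν : ℂ, kiter k τ N ν = f ν • (1 : Matrix (Fin n) (Fin n) ℂ))
    (hsym : ∀ lam ν : ℂ,
      r lam ν = ω • (legA n (k lam) * legB n (k ν) * r (τ lam) (τ ν)
        * (legB n (k ν))⁻¹ * (legA n (k lam))⁻¹)) :
    NRefl n N r τ (fun j _ => ω ^ j) k := by
  intro lam ν
  have hkA : ∀ μ, k μ * (k μ)⁻¹ = 1 := fun μ =>
    Matrix.mul_nonsing_inv _ ((Matrix.isUnit_iff_isUnit_det _).mp (hk μ))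
  have hAiA : ∀ M, legA n (k lam)⁻¹ * (legA n (k lam) * M) = M := by
    intro M
    rw [← mul_assoc, ← legA_mul, Matrix.nonsing_inv_mul _ ((Matrix.isUnit_iff_isUnit_det _).mp (hk lam))]
    simp [legA, Matrix.one_kronecker_one]
  set F : ℕ → Matrix (Fin n × Fin n) (Fin n × Fin n) ℂ := fun j =>
    ω ^ j • (legB n (kiter k τ j ν) * r (τ lam) (τ^[j] ν) * (legB n (kiter k τ j ν))⁻¹)
    with hF
  have key : ∀ j, (ω ^ j • (legB n (kiter k τ j ν) * r lam (τ^[j] ν)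
      * (legB n (kiter k τ j ν))⁻¹)) * legA n (k lam) = legA n (k lam) * F (j + 1) := by
    intro j
    have hμ : τ (τ^[j] ν) = τ^[j+1] ν := (Function.iterate_succ_apply' τ j ν).symm
    rw [hsym lam (τ^[j] ν), hμ]
    simp only [hF, kiter, legB_mul, legB_inv, legA_inv, Matrix.mul_inv_rev,
      smul_mul_assoc, mul_smul_comm, smul_smul, mul_assoc, legB_legA, legB_legA',
      hAiA, pow_succ]
  have hFN : F N = F 0 := by
    simp only [hF, hunit, hτ, hω, pow_zero, kiter, Function.iterate_zero, id_eq]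
    have h1 : legB n (f ν • (1 : Matrix (Fin n) (Fin n) ℂ))
        = f ν • (1 : Matrix (Fin n × Fin n) (Fin n × Fin n) ℂ) := by
      simp [legB, Matrix.kronecker_smul, Matrix.one_kronecker_one]
    have h2 : (f ν • (1 : Matrix (Fin n × Fin n) (Fin n × Fin n) ℂ))⁻¹
        = (f ν)⁻¹ • (1 : Matrix (Fin n × Fin n) (Fin n × Fin n) ℂ) := by
      apply Matrix.inv_eq_right_inv
      rw [smul_mul_smul_comm, mul_one, mul_inv_cancel₀ (hf ν), one_smul]
    rw [h1, h2]
    simp [legB, Matrix.one_kronecker_one, smul_smul, mul_comm (f ν), inv_mul_cancel₀ (hf ν)]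
  calc (∑ j ∈ Finset.range N, ω ^ j • (legB n (kiter k τ j ν) * r lam (τ^[j] ν)
          * (legB n (kiter k τ j ν))⁻¹)) * legA n (k lam)
      = ∑ j ∈ Finset.range N, legA n (k lam) * F (j + 1) := by
        rw [Finset.sum_mul]; exact Finset.sum_congr rfl fun j _ => key j
    _ = legA n (k lam) * ∑ j ∈ Finset.range N, F (j + 1) := by rw [Finset.mul_sum]
    _ = legA n (k lam) * ∑ j ∈ Finset.range N, F j := by
        congr 1
        have h1 := Finset.sum_range_succ' F N
        have h2 := Finset.sum_range_succ F N
        rw [hFN] at h2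
        have := h1.symm.trans h2
        exact add_right_cancel this
    _ = _ := rfl
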